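/- Let Z > 0 be a positive definite matrix with largest eigenvalue a and smallest eigenvalue b. Then for every unit vector h, ‖Zh‖ ≤ ((a+b)/(2√(ab)))·⟨h, Zh⟩. -/

import Mathlib

open Matrix ComplexOrder

theorem kantorovich_vector {n : ℕ} (Z : Matrix (Fin n) (Fin n) ℂ) (hZ : Z.PosDef)
    (a b : ℝ)
    (ha : IsGreatest (Set.range hZ.1.eigenvalues) a)
    (hb : IsLeast (Set.range hZ.1.eigenvalues) b)
    (h : EuclideanSpace ℂ (Fin n)) (hh : ‖h‖ = 1) :
    ‖Matrix.toEuclideanLin Z h‖ ≤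
      (a + b) / (2 * Real.sqrt (a * b)) * (inner ℂ h (Matrix.toEuclideanLin Z h) : ℂ).re := by
  obtain ⟨i₀, hi₀⟩ := hb.1
  have hbpos : 0 < b := hi₀ ▸ hZ.eigenvalues_pos i₀
  have hba : b ≤ a := ha.2 ⟨i₀, hi₀⟩
  have hapos : 0 < a := lt_of_lt_of_le hbpos hba
  have hab : 0 < a * b := mul_pos hapos hbpos
  set e := hZ.1.eigenvectorBasis with he
  set lam := hZ.1.eigenvalues with hlamdef
  set T := Matrix.toEuclideanLin Z with hTdef
  have hlam_le : ∀ i, lam i ≤ a := fun i => ha.2 ⟨i, rfl⟩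
  have hlam_ge : ∀ i, b ≤ lam i := fun i => hb.2 ⟨i, rfl⟩
  have hlam_pos : ∀ i, 0 < lam i := fun i => hZ.eigenvalues_pos i
  -- action on eigenvectors
  have key : ∀ i, T (e i) = (lam i : ℂ) • e i := by
    intro i
    have h1 := hZ.1.mulVec_eigenvectorBasis i
    ext j
    have := congrFun h1 j
    simpa [hTdef, Matrix.toEuclideanLin_apply, he, hlamdef] using this
  have hsym := (Matrix.isHermitian_iff_isSymmetric.mp hZ.1)
  set c : EuclideanSpace ℂ (Fin n) := e.repr h with hc
  have repr_T : ∀ i, e.repr (T h) i = (lam i : ℂ) * c i := by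
    intro i
    rw [e.repr_apply_apply, ← hsym (e i) h, key, inner_smul_left, ← e.repr_apply_apply]
    simp [hc]
  -- Parseval
  have sum_p : ∑ i, ‖c i‖ ^ 2 = 1 := by
    have h1 : ‖c‖ = 1 := by rw [hc, LinearIsometryEquiv.norm_map]; exact hh
    have h2 : ‖c‖ ^ 2 = ∑ i, ‖c i‖ ^ 2 := by
      rw [EuclideanSpace.norm_eq, Real.sq_sqrt (by positivity)]
    rw [← h2, h1, one_pow]
  -- norm of T h
  have normTh : ‖T h‖ ^ 2 = ∑ i, lam i ^ 2 * ‖c i‖ ^ 2 := by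
    have h1 : ‖T h‖ = ‖e.repr (T h)‖ := (LinearIsometryEquiv.norm_map _ _).symm
    rw [h1, EuclideanSpace.norm_eq, Real.sq_sqrt (by positivity)]
    refine Finset.sum_congr rfl fun i _ => ?_
    rw [repr_T i, norm_mul, mul_pow, Complex.norm_real, Real.norm_eq_abs,
      abs_of_pos (hlam_pos i)]
  -- inner product
  set t : ℝ := ∑ i, lam i * ‖c i‖ ^ 2 with ht
  have hinner : (inner ℂ h (T h) : ℂ).re = t := by
    have h1 : (inner ℂ h (T h) : ℂ) = inner ℂ c (e.repr (T h)) := by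
      rw [hc, LinearIsometryEquiv.inner_map_map]
    have h2 : (inner ℂ c (e.repr (T h)) : ℂ) = ((t : ℝ) : ℂ) := by
      rw [PiLp.inner_apply, ht]
      push_cast
      refine Finset.sum_congr rfl fun i _ => ?_
      rw [repr_T i, RCLike.inner_apply, mul_assoc, RCLike.mul_conj]
      rfl
    rw [h1, h2, Complex.ofReal_re]
  have ht_ge : b ≤ t := by
    calc b = ∑ i, b * ‖c i‖ ^ 2 := by rw [← Finset.mul_sum, sum_p, mul_one]
    _ ≤ t := Finset.sum_le_sum fun i _ => by
        have := hlam_ge i; nlinarith [sq_nonneg ‖c i‖]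
  have htpos : 0 < t := lt_of_lt_of_le hbpos ht_ge
  -- step A
  have stepA : ‖T h‖ ^ 2 ≤ (a + b) * t - a * b := by
    rw [normTh]
    calc ∑ i, lam i ^ 2 * ‖c i‖ ^ 2 ≤ ∑ i, ((a + b) * lam i - a * b) * ‖c i‖ ^ 2 :=
        Finset.sum_le_sum fun i _ => by
          have h1 := hlam_le i; have h2 := hlam_ge i
          have h3 : 0 ≤ (a - lam i) * (lam i - b) * ‖c i‖ ^ 2 :=
            mul_nonneg (mul_nonneg (by linarith) (by linarith)) (sq_nonneg _)
          nlinarith [h3]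
      _ = (a + b) * t - a * b := by
          simp only [sub_mul, Finset.sum_sub_distrib, mul_assoc, ← Finset.mul_sum]
          rw [sum_p, ht, mul_one]
  -- step B
  set r : ℝ := (a + b) / (2 * Real.sqrt (a * b)) with hr
  have hsqrt_pos : 0 < Real.sqrt (a * b) := Real.sqrt_pos.mpr hab
  have hrt_nonneg : 0 ≤ r * t := by
    apply mul_nonneg _ htpos.le
    rw [hr]; positivity
  have hrtsq : (r * t) ^ 2 = (a + b) ^ 2 * t ^ 2 / (4 * (a * b)) := by
    rw [hr, mul_pow, div_pow, mul_pow]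
    rw [Real.sq_sqrt hab.le]
    ring
  have hs2 : ‖T h‖ ^ 2 ≤ (r * t) ^ 2 := by
    rw [hrtsq, le_div_iff₀ (by positivity)]
    nlinarith [sq_nonneg ((a + b) * t - 2 * (a * b)), stepA, hab]
  have final : ‖T h‖ ≤ r * t := by
    rw [← Real.sqrt_sq (norm_nonneg (T h)), ← Real.sqrt_sq hrt_nonneg]
    exact Real.sqrt_le_sqrt hs2
  rw [hinner]
  exact final
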